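/- Let G = (V, E) be a finite simple undirected graph, let T ⊆ V be a nonempty set of terminals, let t₁ ∈ T, let k be a natural number, and let w : V → ℕ be a weight function. For every w₀ ∈ ℕ, the number of triples (X, X_L, X_R) such that T ⊆ X ⊆ V, |X| = k, w(X) = w₀, (X_L, X_R) is a consistent cut of G[X], and t₁ ∈ X_L, is congruent modulo 2 to the number of sets X such that T ⊆ X ⊆ V, |X| = k, w(X) = w₀, and G[X] is connected. -/

import Mathlib

/-- `(XL, XR)` is a consistent cut of the subgraph of `G` induced by `X`:
it partitions `X` and no edge of `G` joins a vertex of `XL` to a vertex of `XR`. -/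
def ConsCut {V : Type} [DecidableEq V] (G : SimpleGraph V) (X XL XR : Finset V) : Prop :=
  XL ∪ XR = X ∧ Disjoint XL XR ∧ ∀ u ∈ XL, ∀ v ∈ XR, ¬ G.Adj u v

section Aux

variable {V : Type} [Fintype V] [DecidableEq V]

attribute [local instance] Classical.propDecidable

open Finset

/-- Along a walk in the induced subgraph, membership in a closed set propagates. -/
lemma aux_closed_walk (G : SimpleGraph V) (X S : Finset V)
    (hcl : ∀ u v, u ∈ X → v ∈ X → G.Adj u v → (u ∈ S ↔ v ∈ S)) :
    ∀ (a b : (X : Set V)), (G.induce (X : Set V)).Walk a b → (a : V) ∈ S → (b : V) ∈ S := by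
  intro a b p
  induction p with
  | nil => exact id
  | @cons u v w h _ ih =>
    intro hu
    exact ih ((hcl u v u.2 v.2 h).mp hu)

/-- Parity of the number of closed sets containing `t₁`. -/
lemma closed_parity (G : SimpleGraph V) (X : Finset V) (t₁ : V) (ht : t₁ ∈ X) :
    (((Finset.univ.filter (fun S : Finset V => S ⊆ X ∧ t₁ ∈ S ∧
        ∀ u v, u ∈ X → v ∈ X → G.Adj u v → (u ∈ S ↔ v ∈ S))).card : ℕ) : ZMod 2)
      = if (G.induce (X : Set V)).Connected then 1 else 0 := by
  classical
  by_cases hconn : (G.induce (X : Set V)).Connected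
  · rw [if_pos hconn]
    have hset : (Finset.univ.filter (fun S : Finset V => S ⊆ X ∧ t₁ ∈ S ∧
        ∀ u v, u ∈ X → v ∈ X → G.Adj u v → (u ∈ S ↔ v ∈ S))) = {X} := by
      ext S
      simp only [mem_filter, mem_univ, true_and, mem_singleton]
      constructor
      · rintro ⟨hSX, htS, hcl⟩
        apply Finset.Subset.antisymm hSX
        intro x hx
        obtain ⟨p⟩ := hconn.preconnected ⟨t₁, ht⟩ ⟨x, hx⟩
        exact aux_closed_walk G X S hcl _ _ p htS
      · rintro rfl
        exact ⟨le_rfl, ht, fun u v hu hv _ => by simp [hu, hv]⟩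
    rw [hset]
    simp
  · rw [if_neg hconn]
    -- find a vertex not reachable from t₁ in the induced subgraph
    have hne : Nonempty (X : Set V) := ⟨⟨t₁, ht⟩⟩
    have hex : ∃ a b : (X : Set V), ¬ (G.induce (X : Set V)).Reachable a b := by
      rw [SimpleGraph.connected_iff] at hconn
      by_contra hc
      push_neg at hc
      exact hconn ⟨fun a b => hc a b, hne⟩
    obtain ⟨a, b, hab⟩ := hex
    have hv : ∃ v : (X : Set V), ¬ (G.induce (X : Set V)).Reachable ⟨t₁, ht⟩ v := by
      by_cases hta : (G.induce (X : Set V)).Reachable ⟨t₁, ht⟩ a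
      · exact ⟨b, fun htb => hab (hta.symm.trans htb)⟩
      · exact ⟨a, hta⟩
    obtain ⟨v, hv⟩ := hv
    -- the reachability component of v
    set C : Finset V := X.filter
      (fun u => ∃ h : u ∈ X, (G.induce (X : Set V)).Reachable v ⟨u, h⟩) with hC
    have hmemC : ∀ u (h : u ∈ X),
        (u ∈ C ↔ (G.induce (X : Set V)).Reachable v ⟨u, h⟩) := by
      intro u h
      simp only [hC, mem_filter]
      constructor
      · rintro ⟨_, _, hr⟩; exact hr
      · intro hr; exact ⟨h, h, hr⟩
    have ht₁C : t₁ ∉ C := by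
      intro hmem
      exact hv (((hmemC t₁ ht).mp hmem).symm)
    have hvC : (v : V) ∈ C := by
      exact (hmemC (v : V) v.2).mpr (SimpleGraph.Reachable.refl _)
    have hCcl : ∀ u u', u ∈ X → u' ∈ X → G.Adj u u' → (u ∈ C ↔ u' ∈ C) := by
      intro u u' hu hu' hadj
      have hstep : (G.induce (X : Set V)).Adj ⟨u, hu⟩ ⟨u', hu'⟩ := hadj
      rw [hmemC u hu, hmemC u' hu']
      exact ⟨fun hr => hr.trans hstep.reachable, fun hr => hr.trans hstep.symm.reachable⟩
    -- fixed-point-free involution S ↦ S ∆ C, so the count is even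
    rw [Finset.card_eq_sum_ones, Nat.cast_sum]
    refine Finset.sum_involution (fun S _ => symmDiff S C) ?_ ?_ ?_ ?_
    · intro S _
      push_cast
      decide
    · intro S hS _
      intro heq
      have hSmem := Finset.mem_filter.mp hS
      have hvm : (v : V) ∈ symmDiff S C ↔ (v : V) ∉ S := by
        rw [Finset.mem_symmDiff]
        constructor
        · rintro (⟨_, h2⟩ | ⟨_, h2⟩)
          · exact absurd hvC h2
          · exact h2
        · intro h; exact Or.inr ⟨hvC, h⟩
      have heq' : symmDiff S C = S := heq
      rw [heq'] at hvm
      tauto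
    · intro S hS
      obtain ⟨_, hSX, htS, hcl⟩ := Finset.mem_filter.mp hS
      refine Finset.mem_filter.mpr ⟨Finset.mem_univ _, ?_, ?_, ?_⟩
      · intro x hx
        rw [Finset.mem_symmDiff] at hx
        rcases hx with ⟨h1, _⟩ | ⟨h1, _⟩
        · exact hSX h1
        · exact Finset.mem_of_mem_filter _ h1
      · rw [Finset.mem_symmDiff]
        exact Or.inl ⟨htS, ht₁C⟩
      · intro u u' hu hu' hadj
        rw [Finset.mem_symmDiff, Finset.mem_symmDiff,
          hcl u u' hu hu' hadj, hCcl u u' hu hu' hadj]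
    · intro S _
      show symmDiff (symmDiff S C) C = S
      exact symmDiff_symmDiff_cancel_right C S

/-- The number of consistent cuts with `t₁` on the left equals the number of closed sets
containing `t₁`. -/
lemma cuts_card (G : SimpleGraph V) (X : Finset V) (t₁ : V) :
    (Finset.univ.filter (fun p : Finset V × Finset V =>
        ConsCut G X p.1 p.2 ∧ t₁ ∈ p.1)).card
      = (Finset.univ.filter (fun S : Finset V => S ⊆ X ∧ t₁ ∈ S ∧
        ∀ u v, u ∈ X → v ∈ X → G.Adj u v → (u ∈ S ↔ v ∈ S))).card := by
  classical
  apply Finset.card_nbij' (fun p => p.1) (fun S => (S, X \ S))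
  · intro p hp
    simp only [Finset.mem_coe, Finset.mem_filter, Finset.mem_univ, true_and] at hp ⊢
    obtain ⟨⟨hun, hd, hna⟩, htL⟩ := hp
    refine ⟨?_, htL, ?_⟩
    · rw [← hun]; exact Finset.subset_union_left
    · intro u u' hu hu' hadj
      constructor
      · intro huS
        by_contra hu'S
        have hu'R : u' ∈ p.2 := by
          have : u' ∈ p.1 ∪ p.2 := hun ▸ hu'
          rcases Finset.mem_union.mp this with h | h
          · exact absurd h hu'S
          · exact h
        exact hna u huS u' hu'R hadj
      · intro hu'S
        by_contra huS
        have huR : u ∈ p.2 := by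
          have : u ∈ p.1 ∪ p.2 := hun ▸ hu
          rcases Finset.mem_union.mp this with h | h
          · exact absurd h huS
          · exact h
        exact hna u' hu'S u huR hadj.symm
  · intro S hS
    simp only [Finset.mem_coe, Finset.mem_filter, Finset.mem_univ, true_and] at hS ⊢
    obtain ⟨hSX, htS, hcl⟩ := hS
    refine ⟨⟨Finset.union_sdiff_of_subset hSX, Finset.disjoint_sdiff, ?_⟩, htS⟩
    intro u huS u' hu' hadj
    rw [Finset.mem_sdiff] at hu'
    exact hu'.2 ((hcl u u' (hSX huS) hu'.1 hadj).mp huS)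
  · intro p hp
    simp only [Finset.mem_coe, Finset.mem_filter, Finset.mem_univ, true_and] at hp
    obtain ⟨⟨hun, hd, _⟩, _⟩ := hp
    have : X \ p.1 = p.2 := by
      rw [← hun, Finset.union_sdiff_cancel_left hd]
    show (p.1, X \ p.1) = p
    rw [this]
  · intro S _
    rfl

end Aux

/-- Cut&Count correctness for **Steiner Tree**: for terminals `T ≠ ∅`, `t₁ ∈ T`, and every
target weight `w₀`, the number of triples `(X, X_L, X_R)` with `T ⊆ X`, `|X| = k`,
`w(X) = w₀`, `(X_L, X_R)` a consistent cut of `G[X]` and `t₁ ∈ X_L`, is congruent modulo 2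
to the number of sets `X` with `T ⊆ X`, `|X| = k`, `w(X) = w₀` and `G[X]` connected. -/
theorem steiner_cut_and_count {V : Type} [Fintype V] [DecidableEq V] (G : SimpleGraph V)
    (T : Finset V) (hT : T.Nonempty) (t₁ : V) (ht₁ : t₁ ∈ T)
    (k : ℕ) (w : V → ℕ) (w₀ : ℕ) :
    Set.ncard {t : Finset V × Finset V × Finset V |
        T ⊆ t.1 ∧ t.1.card = k ∧ (∑ u ∈ t.1, w u) = w₀ ∧
        ConsCut G t.1 t.2.1 t.2.2 ∧ t₁ ∈ t.2.1} ≡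
      Set.ncard {X : Finset V |
        T ⊆ X ∧ X.card = k ∧ (∑ u ∈ X, w u) = w₀ ∧
        (G.induce (X : Set V)).Connected} [MOD 2] := by
  classical
  have h1 : Set.ncard {t : Finset V × Finset V × Finset V |
        T ⊆ t.1 ∧ t.1.card = k ∧ (∑ u ∈ t.1, w u) = w₀ ∧
        ConsCut G t.1 t.2.1 t.2.2 ∧ t₁ ∈ t.2.1}
      = (Finset.univ.filter (fun t : Finset V × Finset V × Finset V =>
        T ⊆ t.1 ∧ t.1.card = k ∧ (∑ u ∈ t.1, w u) = w₀ ∧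
        ConsCut G t.1 t.2.1 t.2.2 ∧ t₁ ∈ t.2.1)).card := by
    rw [Set.ncard_eq_toFinset_card _ (Set.toFinite _)]
    congr 1
    ext x
    simp [Set.Finite.mem_toFinset]
  have h2 : Set.ncard {X : Finset V |
        T ⊆ X ∧ X.card = k ∧ (∑ u ∈ X, w u) = w₀ ∧
        (G.induce (X : Set V)).Connected}
      = (Finset.univ.filter (fun X : Finset V =>
        T ⊆ X ∧ X.card = k ∧ (∑ u ∈ X, w u) = w₀ ∧
        (G.induce (X : Set V)).Connected)).card := by
    rw [Set.ncard_eq_toFinset_card _ (Set.toFinite _)]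
    congr 1
    ext x
    simp [Set.Finite.mem_toFinset]
  rw [h1, h2, ← ZMod.natCast_eq_natCast_iff]
  rw [Finset.card_eq_sum_card_fiberwise
      (f := fun t : Finset V × Finset V × Finset V => t.1) (t := Finset.univ)
      (fun x _ => Finset.mem_univ _)]
  rw [Finset.card_filter]
  push_cast
  refine Finset.sum_congr rfl ?_
  intro X _
  rw [Finset.filter_filter]
  by_cases hbase : T ⊆ X ∧ X.card = k ∧ (∑ u ∈ X, w u) = w₀
  · obtain ⟨hTX, hk, hw⟩ := hbase
    have hfib : (Finset.univ.filter (fun t : Finset V × Finset V × Finset V =>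
        (T ⊆ t.1 ∧ t.1.card = k ∧ (∑ u ∈ t.1, w u) = w₀ ∧
        ConsCut G t.1 t.2.1 t.2.2 ∧ t₁ ∈ t.2.1) ∧ t.1 = X)).card
        = (Finset.univ.filter (fun p : Finset V × Finset V =>
          ConsCut G X p.1 p.2 ∧ t₁ ∈ p.1)).card := by
      apply Finset.card_nbij' (fun t => t.2) (fun p => (X, p.1, p.2))
      · intro t ht
        simp only [Finset.mem_coe, Finset.mem_filter, Finset.mem_univ, true_and] at ht ⊢
        obtain ⟨⟨_, _, _, hc, hl⟩, hX⟩ := ht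
        rw [hX] at hc
        exact ⟨hc, hl⟩
      · intro p hp
        simp only [Finset.mem_coe, Finset.mem_filter, Finset.mem_univ, true_and] at hp ⊢
        exact ⟨⟨hTX, hk, hw, hp.1, hp.2⟩, by trivial⟩
      · intro t ht
        simp only [Finset.mem_coe, Finset.mem_filter, Finset.mem_univ, true_and] at ht
        rw [← ht.2]
      · intro p _
        rfl
    rw [hfib, cuts_card G X t₁, closed_parity G X t₁ (hTX ht₁)]
    simp [hTX, hk, hw]
  · have hfib : (Finset.univ.filter (fun t : Finset V × Finset V × Finset V =>
        (T ⊆ t.1 ∧ t.1.card = k ∧ (∑ u ∈ t.1, w u) = w₀ ∧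
        ConsCut G t.1 t.2.1 t.2.2 ∧ t₁ ∈ t.2.1) ∧ t.1 = X)) = ∅ := by
      rw [Finset.filter_eq_empty_iff]
      rintro t _ ⟨⟨hTt, hkt, hwt, _⟩, rfl⟩
      exact hbase ⟨hTt, hkt, hwt⟩
    rw [hfib]
    have : ¬ (T ⊆ X ∧ X.card = k ∧ (∑ u ∈ X, w u) = w₀ ∧
        (G.induce (X : Set V)).Connected) := by
      rintro ⟨h1, h2, h3, _⟩
      exact hbase ⟨h1, h2, h3⟩
    simp [this]
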